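/- Let (f_x)_{x ∈ {0,1}^n} be a finite family of square-integrable real random variables whose joint law is invariant under simultaneous sign flip (i.e., (f_x)_x and (−f_x)_x are equal in distribution), let γ ∈ ℝ, and let s : {0,1}^n → {−1, 1} be any sign function. Then E[∑_{x,y} s(x)s(y) R_γ(f_x) R_γ(f_y)] = ((1+γ)²/4) · E[∑_{x,y} s(x)s(y) f_x f_y] + ((1−γ)²/4) · E[(∑_x s(x)|f_x|)²]; in particular, E[∑_{x,y} s(x)s(y) R_γ(f_x) R_γ(f_y)] ≥ ((1+γ)²/4) · E[∑_{x,y} s(x)s(y) f_x f_y], where R_γ(t) = max(t, γt) is the leaky-ReLU function. -/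

import Mathlib

open MeasureTheory

/-- The leaky-ReLU activation with slope parameter `γ`. -/
noncomputable def leakyRelu (γ t : ℝ) : ℝ := max t (γ * t)

theorem leakyRelu_eq (γ t : ℝ) :
    leakyRelu γ t = (1 + γ) / 2 * t + |1 - γ| / 2 * |t| := by
  rcases le_total t 0 with h | h <;> rcases le_total γ 1 with hg | hg
  · rw [leakyRelu, abs_of_nonpos h, abs_of_nonneg (sub_nonneg.2 hg),
      max_eq_right (by nlinarith)]; ring
  · rw [leakyRelu, abs_of_nonpos h, abs_of_nonpos (sub_nonpos.2 hg),
      max_eq_left (by nlinarith)]; ring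
  · rw [leakyRelu, abs_of_nonneg h, abs_of_nonneg (sub_nonneg.2 hg),
      max_eq_left (by nlinarith)]; ring
  · rw [leakyRelu, abs_of_nonneg h, abs_of_nonpos (sub_nonpos.2 hg),
      max_eq_right (by nlinarith)]; ring

/-- Let `(f_x)_{x ∈ {0,1}^n}` be square-integrable real random variables
whose joint law is invariant under simultaneous sign flip, `γ ∈ ℝ`, and `s : {0,1}^n → {±1}`
a sign function. Then
`E[∑_{x,y} s(x)s(y) R_γ(f_x) R_γ(f_y)] = ((1+γ)²/4) E[∑_{x,y} s(x)s(y) f_x f_y]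
 + ((1-γ)²/4) E[(∑_x s(x)|f_x|)²]`, and in particular the left-hand side is at least
`((1+γ)²/4) E[∑_{x,y} s(x)s(y) f_x f_y]`. -/
theorem leakyRelu_signed_second_moment
    {Ω : Type*} [MeasurableSpace Ω] (μ : Measure Ω) [IsProbabilityMeasure μ]
    (n : ℕ) (f : (Fin n → Bool) → Ω → ℝ)
    (hf : ∀ x, MemLp (f x) 2 μ)
    (hsym : Measure.map (fun ω => fun x => f x ω) μ
      = Measure.map (fun ω => fun x => -f x ω) μ)
    (γ : ℝ) (s : (Fin n → Bool) → ℝ) (hs : ∀ x, s x = 1 ∨ s x = -1) :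
    (∫ ω, ∑ x : Fin n → Bool, ∑ y : Fin n → Bool,
        s x * s y * leakyRelu γ (f x ω) * leakyRelu γ (f y ω) ∂μ
      = (1 + γ) ^ 2 / 4 * ∫ ω, ∑ x : Fin n → Bool, ∑ y : Fin n → Bool,
          s x * s y * f x ω * f y ω ∂μ
        + (1 - γ) ^ 2 / 4 * ∫ ω, (∑ x : Fin n → Bool, s x * |f x ω|) ^ 2 ∂μ) ∧
    ((1 + γ) ^ 2 / 4 * ∫ ω, ∑ x : Fin n → Bool, ∑ y : Fin n → Bool,
        s x * s y * f x ω * f y ω ∂μ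
      ≤ ∫ ω, ∑ x : Fin n → Bool, ∑ y : Fin n → Bool,
          s x * s y * leakyRelu γ (f x ω) * leakyRelu γ (f y ω) ∂μ) := by
  set a : ℝ := (1 + γ) / 2 with ha
  set b : ℝ := |1 - γ| / 2 with hb
  set T : Ω → ℝ := fun ω => ∑ x : Fin n → Bool, s x * f x ω with hTdef
  set A : Ω → ℝ := fun ω => ∑ x : Fin n → Bool, s x * |f x ω| with hAdef
  -- membership in L2
  have hT : MemLp T 2 μ := by
    have h := memLp_finset_sum' (μ := μ) Finset.univ
      (f := fun (x : Fin n → Bool) ω => s x * f x ω)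
      (fun x _ => (hf x).const_mul (s x))
    have e : (∑ x : Fin n → Bool, fun ω => s x * f x ω) = T := by
      funext ω; rw [hTdef]; simp
    rwa [e] at h
  have habs : ∀ x, MemLp (fun ω => |f x ω|) 2 μ := fun x => by
    simpa [Real.norm_eq_abs] using (hf x).norm
  have hA : MemLp A 2 μ := by
    have h := memLp_finset_sum' (μ := μ) Finset.univ
      (f := fun (x : Fin n → Bool) ω => s x * |f x ω|)
      (fun x _ => (habs x).const_mul (s x))
    have e : (∑ x : Fin n → Bool, fun ω => s x * |f x ω|) = A := by
      funext ω; rw [hAdef]; simp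
    rwa [e] at h
  have hT2 : Integrable (fun ω => T ω ^ 2) μ := hT.integrable_sq
  have hA2 : Integrable (fun ω => A ω ^ 2) μ := hA.integrable_sq
  have hTA : Integrable (fun ω => T ω * A ω) μ := by
    have h := hA.smul (r := 1) hT
    have := memLp_one_iff_integrable.mp h
    exact this
  -- pointwise identities
  have hpt1 : ∀ ω, (∑ x : Fin n → Bool, ∑ y : Fin n → Bool,
      s x * s y * leakyRelu γ (f x ω) * leakyRelu γ (f y ω))
      = (a * T ω + b * A ω) ^ 2 := by
    intro ω
    have hsum : (∑ x : Fin n → Bool, s x * leakyRelu γ (f x ω)) = a * T ω + b * A ω := by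
      rw [hTdef, hAdef]
      simp only [Finset.mul_sum]
      rw [← Finset.sum_add_distrib]
      exact Finset.sum_congr rfl fun x _ => by rw [leakyRelu_eq]; ring
    calc (∑ x : Fin n → Bool, ∑ y : Fin n → Bool,
          s x * s y * leakyRelu γ (f x ω) * leakyRelu γ (f y ω))
        = (∑ x : Fin n → Bool, s x * leakyRelu γ (f x ω)) *
            (∑ y : Fin n → Bool, s y * leakyRelu γ (f y ω)) := by
          rw [Finset.sum_mul_sum]
          exact Finset.sum_congr rfl fun x _ => Finset.sum_congr rfl fun y _ => by ring
      _ = (a * T ω + b * A ω) ^ 2 := by rw [hsum, sq]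
  have hpt2 : ∀ ω, (∑ x : Fin n → Bool, ∑ y : Fin n → Bool,
      s x * s y * f x ω * f y ω) = T ω ^ 2 := by
    intro ω
    rw [hTdef, sq, Finset.sum_mul_sum]
    exact Finset.sum_congr rfl fun x _ => Finset.sum_congr rfl fun y _ => by ring
  -- cross term vanishes by symmetry
  have hcross : ∫ ω, T ω * A ω ∂μ = 0 := by
    set g : ((Fin n → Bool) → ℝ) → ℝ := fun v =>
      (∑ x : Fin n → Bool, s x * v x) * (∑ x : Fin n → Bool, s x * |v x|) with hg
    have hgc : Continuous g := by
      apply Continuous.mul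
      · exact continuous_finset_sum _ fun x _ => continuous_const.mul (continuous_apply x)
      · exact continuous_finset_sum _ fun x _ => continuous_const.mul (continuous_apply x).abs
    have hpi : ∀ (F : (Fin n → Bool) → Ω → ℝ), (∀ x, AEMeasurable (F x) μ) →
        AEMeasurable (fun ω => fun x => F x ω) μ := by
      intro F h
      refine ⟨fun ω x => (h x).mk _ ω, measurable_pi_lambda _ fun x => (h x).measurable_mk, ?_⟩
      have hae : ∀ᵐ ω ∂μ, ∀ x, F x ω = (h x).mk _ ω := ae_all_iff.2 fun x => (h x).ae_eq_mk
      filter_upwards [hae] with ω hω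
      exact funext fun x => hω x
    have hF : AEMeasurable (fun ω => fun x => f x ω) μ :=
      hpi _ fun x => (hf x).aestronglyMeasurable.aemeasurable
    have hG : AEMeasurable (fun ω => fun x => -f x ω) μ :=
      hpi _ fun x => (hf x).aestronglyMeasurable.aemeasurable.neg
    have key : ∫ ω, g (fun x => f x ω) ∂μ = ∫ ω, g (fun x => -f x ω) ∂μ := by
      rw [← integral_map hF hgc.aestronglyMeasurable, hsym,
        integral_map hG hgc.aestronglyMeasurable]
    have e1 : ∀ ω, g (fun x => f x ω) = T ω * A ω := fun ω => rfl
    have e2 : ∀ ω, g (fun x => -f x ω) = -(T ω * A ω) := by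
      intro ω
      simp only [hg, abs_neg, mul_neg, Finset.sum_neg_distrib, hTdef, hAdef, neg_mul]
    simp only [e1, e2] at key
    rw [integral_neg] at key
    linarith
  -- main computation
  have hmain : ∫ ω, (∑ x : Fin n → Bool, ∑ y : Fin n → Bool,
      s x * s y * leakyRelu γ (f x ω) * leakyRelu γ (f y ω)) ∂μ
      = (1 + γ) ^ 2 / 4 * ∫ ω, (∑ x : Fin n → Bool, ∑ y : Fin n → Bool,
          s x * s y * f x ω * f y ω) ∂μ
        + (1 - γ) ^ 2 / 4 * ∫ ω, (∑ x : Fin n → Bool, s x * |f x ω|) ^ 2 ∂μ := by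
    have hexp : ∀ ω, (a * T ω + b * A ω) ^ 2
        = a ^ 2 * T ω ^ 2 + (2 * a * b) * (T ω * A ω) + b ^ 2 * A ω ^ 2 := fun ω => by ring
    calc ∫ ω, (∑ x : Fin n → Bool, ∑ y : Fin n → Bool,
          s x * s y * leakyRelu γ (f x ω) * leakyRelu γ (f y ω)) ∂μ
        = ∫ ω, (a ^ 2 * T ω ^ 2 + (2 * a * b) * (T ω * A ω) + b ^ 2 * A ω ^ 2) ∂μ := by
          simp_rw [hpt1, hexp]
      _ = a ^ 2 * ∫ ω, T ω ^ 2 ∂μ + (2 * a * b) * ∫ ω, T ω * A ω ∂μ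
            + b ^ 2 * ∫ ω, A ω ^ 2 ∂μ := by
          have i1 : Integrable (fun ω => a ^ 2 * T ω ^ 2) μ := hT2.const_mul _
          have i2 : Integrable (fun ω => 2 * a * b * (T ω * A ω)) μ := hTA.const_mul _
          have i3 : Integrable (fun ω => b ^ 2 * A ω ^ 2) μ := hA2.const_mul _
          have i12 : Integrable (fun ω => a ^ 2 * T ω ^ 2 + 2 * a * b * (T ω * A ω)) μ :=
            i1.add i2
          rw [integral_add i12 i3, integral_add i1 i2,
            integral_const_mul, integral_const_mul, integral_const_mul]
      _ = (1 + γ) ^ 2 / 4 * ∫ ω, T ω ^ 2 ∂μ + (1 - γ) ^ 2 / 4 * ∫ ω, A ω ^ 2 ∂μ := by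
          rw [hcross]
          have hb2 : b ^ 2 = (1 - γ) ^ 2 / 4 := by
            rw [hb, div_pow, sq_abs]; norm_num
          have ha2 : a ^ 2 = (1 + γ) ^ 2 / 4 := by rw [ha, div_pow]; norm_num
          rw [ha2, hb2]; ring
      _ = _ := by simp_rw [hpt2]; rfl
  refine ⟨hmain, ?_⟩
  rw [hmain]
  have : 0 ≤ (1 - γ) ^ 2 / 4 * ∫ ω, (∑ x : Fin n → Bool, s x * |f x ω|) ^ 2 ∂μ := by
    apply mul_nonneg (by positivity)
    exact integral_nonneg fun ω => sq_nonneg _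
  linarith
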